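/- Let Λ, X be finite and P a strictly positive probability on X^Λ. Fix θ ∈ X^Λ and define H_t^z(x) = ln(P(xz)/P(θ_t z)) for x ∈ X, z ∈ X^{Λ\{t}}, t ∈ Λ. Then the family {H_t^z} is a one-point Hamiltonian: for all distinct t,s ∈ Λ, x,u,y,v ∈ X, z ∈ X^{Λ\{t,s}}, H_t^{zy}(x) + H_s^{zx}(v) + H_t^{zv}(u) + H_s^{zu}(y) = H_t^{zy}(u) + H_s^{zu}(v) + H_t^{zv}(x) + H_s^{zx}(y). -/
import Mathlib


def cat {Λ X : Type*} [DecidableEq Λ] (t : Λ) (x : X) (z : {s : Λ // s ≠ t} → X) : Λ → X :=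
  fun s => if h : s = t then x else z ⟨s, h⟩

def catT {Λ X : Type*} [DecidableEq Λ] (t s : Λ) (y : X) (z : {r : Λ // r ≠ t ∧ r ≠ s} → X) :
    {r : Λ // r ≠ t} → X :=
  fun r => if h : r.1 = s then y else z ⟨r.1, r.2, h⟩

def catS {Λ X : Type*} [DecidableEq Λ] (t s : Λ) (x : X) (z : {r : Λ // r ≠ t ∧ r ≠ s} → X) :
    {r : Λ // r ≠ s} → X :=
  fun r => if h : r.1 = t then x else z ⟨r.1, h, r.2⟩

lemma cat_comm {Λ X : Type*} [DecidableEq Λ] (t s : Λ) (hts : t ≠ s) (a b : X)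
    (z : {r : Λ // r ≠ t ∧ r ≠ s} → X) :
    cat t a (catT t s b z) = cat s b (catS t s a z) := by
  funext r
  simp only [cat, catT, catS]
  by_cases h1 : r = t
  · subst h1; simp [hts]
  · by_cases h2 : r = s
    · subst h2; simp [h1]
    · simp [h1, h2]

theorem stmt19 {Λ X : Type*} [DecidableEq Λ] [Fintype Λ] [Fintype X]
    [Nonempty Λ] [Nonempty X]
    (P : (Λ → X) → ℝ) (hpos : ∀ σ, 0 < P σ) (hsum : ∑ σ, P σ = 1)
    (θ : Λ → X)
    (H : ∀ t : Λ, ({s : Λ // s ≠ t} → X) → X → ℝ)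
    (hH : ∀ t z x, H t z x = Real.log (P (cat t x z) / P (cat t (θ t) z))) :
    ∀ t s : Λ, t ≠ s → ∀ x u y v : X, ∀ z : {r : Λ // r ≠ t ∧ r ≠ s} → X,
      H t (catT t s y z) x + H s (catS t s x z) v + H t (catT t s v z) u + H s (catS t s u z) y
        = H t (catT t s y z) u + H s (catS t s u z) v + H t (catT t s v z) x
            + H s (catS t s x z) y := by
  intro t s hts x u y v z
  have key : ∀ a b : X,
      Real.log (P (cat s b (catS t s a z))) = Real.log (P (cat t a (catT t s b z))) := by
    intro a b; rw [cat_comm t s hts a b z]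
  set Q : X → X → ℝ := fun a b => Real.log (P (cat t a (catT t s b z))) with hQ
  have hlog : ∀ a b : X, Real.log (P (cat t a (catT t s b z)) / P (cat t (θ t) (catT t s b z)))
      = Q a b - Q (θ t) b := by
    intro a b
    exact Real.log_div (hpos _).ne' (hpos _).ne'
  have hlog2 : ∀ a b : X, Real.log (P (cat s b (catS t s a z)) / P (cat s (θ s) (catS t s a z)))
      = Q a b - Q a (θ s) := by
    intro a b
    rw [Real.log_div (hpos _).ne' (hpos _).ne', key a b, key a (θ s)]
  simp only [hH, hlog, hlog2]
  ring
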